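/- arXiv:2005.09680 — 2 statements merged into one kernel-verified Lean document; each statement's English description precedes it below -/
import Mathlib

section
/- Let N_p = ⟨a^q⟩ ≤ N_{pq²}, a normal subgroup of order p. Then: (1) N_{pq²}/N_p is a q-group and every normal subgroup of N_{pq²} with q-group quotient contains N_p, i.e. O^q(N_{pq²}) = N_p; (2) the only normal subgroup of N_{pq²} whose quotient is a p-group is N_{pq²} itself, i.e. O^p(N_{pq²}) = N_{pq²}. Consequently, every large subgroup of N_{pq²} contains N_p. -/
open Multiplicative

namespace Mizerka

/-- The standing hypotheses: `p` and `q` are odd primes with `q ∣ p - 1`, and `i` is a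
natural number with `i ≡ 1 (mod q)` whose multiplicative order modulo `p` equals `q`. -/
structure Hyp (p q i : ℕ) : Prop where
  hp : Nat.Prime p
  hq : Nat.Prime q
  hoddp : Odd p
  hoddq : Odd q
  hdvd : q ∣ p - 1
  hmod : i ≡ 1 [MOD q]
  hord : orderOf (i : ZMod p) = q

namespace Hyp

variable {p q i : ℕ}

theorem coprime_q (h : Hyp p q i) : Nat.Coprime i q := by
  have h1 : i % q = 1 % q := h.hmod
  unfold Nat.Coprime
  rw [Nat.gcd_comm, Nat.gcd_rec, h1, ← Nat.gcd_rec, Nat.gcd_one_right]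

theorem coprime_p (h : Hyp p q i) : Nat.Coprime i p := by
  haveI : NeZero p := ⟨h.hp.ne_zero⟩
  have hq1 : q - 1 + 1 = q := Nat.succ_pred_eq_of_pos h.hq.pos
  have hmul : (i : ZMod p) * (i : ZMod p) ^ (q - 1) = 1 := by
    rw [← pow_succ', hq1, ← h.hord, pow_orderOf_eq_one]
  exact (ZMod.isUnit_iff_coprime i p).mp (IsUnit.of_mul_eq_one _ hmul)

theorem coprime (h : Hyp p q i) : Nat.Coprime i (p * q) :=
  Nat.Coprime.mul_right h.coprime_p h.coprime_q

theorem pow_q_modeq (h : Hyp p q i) : i ^ q ≡ 1 [MOD p * q] := by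
  have hpq : p ≠ q := by
    have h1 : 0 < p - 1 := by have := h.hp.two_le; omega
    have := Nat.le_of_dvd h1 h.hdvd
    omega
  have hc : Nat.Coprime p q := (Nat.coprime_primes h.hp h.hq).mpr hpq
  rw [← Nat.modEq_and_modEq_iff_modEq_mul hc]
  constructor
  · haveI : NeZero p := ⟨h.hp.ne_zero⟩
    have hcast : ((i ^ q : ℕ) : ZMod p) = ((1 : ℕ) : ZMod p) := by
      push_cast
      rw [← h.hord, pow_orderOf_eq_one]
    exact (ZMod.natCast_eq_natCast_iff _ _ _).mp hcast
  · calc i ^ q ≡ 1 ^ q [MOD q] := h.hmod.pow q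
      _ = 1 := one_pow q

/-- The unit of `ZMod (p*q)` determined by `i`. -/
def unit (h : Hyp p q i) : (ZMod (p * q))ˣ := ZMod.unitOfCoprime i h.coprime

/-- The unit of `ZMod p` determined by `i`. -/
def unitP (h : Hyp p q i) : (ZMod p)ˣ := ZMod.unitOfCoprime i h.coprime_p

theorem unit_pow (h : Hyp p q i) : h.unit ^ q = 1 := by
  apply Units.ext
  have h2 : ((i ^ q : ℕ) : ZMod (p * q)) = ((1 : ℕ) : ZMod (p * q)) :=
    (ZMod.natCast_eq_natCast_iff _ _ _).mpr h.pow_q_modeq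
  push_cast at h2
  simpa [Hyp.unit] using h2

theorem unitP_pow (h : Hyp p q i) : h.unitP ^ q = 1 := by
  apply Units.ext
  have h2 : (i : ZMod p) ^ q = 1 := by rw [← h.hord]; exact pow_orderOf_eq_one _
  simpa [Hyp.unitP] using h2

end Hyp

/-- Multiplication by a unit, as an automorphism of the (multiplicatively written)
cyclic group `ZMod n`. -/
def zmodMulAut (n : ℕ) : (ZMod n)ˣ →* MulAut (Multiplicative (ZMod n)) where
  toFun u :=
    { toFun := fun x => ofAdd ((u : ZMod n) * x.toAdd)
      invFun := fun x => ofAdd (((u⁻¹ : (ZMod n)ˣ) : ZMod n) * x.toAdd)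
      left_inv := fun x => by simp
      right_inv := fun x => by simp
      map_mul' := fun x y => by simp [mul_add, ← ofAdd_add] }
  map_one' := by ext x; simp
  map_mul' u v := by ext x; simp [mul_assoc]

/-- The function underlying the automorphism of the dihedral group induced by
multiplication by a unit on the rotation part. -/
def dihedralAutFun (n : ℕ) (u : (ZMod n)ˣ) : DihedralGroup n → DihedralGroup n
  | .r j => .r ((u : ZMod n) * j)
  | .sr j => .sr ((u : ZMod n) * j)

/-- Multiplication of indices by a unit, as an automorphism of the dihedral group:
`a ↦ a^u`, `b ↦ b`. -/
def dihedralAut (n : ℕ) : (ZMod n)ˣ →* MulAut (DihedralGroup n) where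
  toFun u :=
    { toFun := dihedralAutFun n u
      invFun := dihedralAutFun n u⁻¹
      left_inv := fun x => by cases x <;> simp [dihedralAutFun]
      right_inv := fun x => by cases x <;> simp [dihedralAutFun]
      map_mul' := fun x y => by cases x <;> cases y <;> simp [dihedralAutFun, mul_add, mul_sub] }
  map_one' := by ext x; cases x <;> simp [dihedralAutFun]
  map_mul' u v := by ext x; cases x <;> simp [dihedralAutFun, mul_assoc]

/-- The homomorphism `ZMod q →* G` (written multiplicatively) sending `1` to a fixed
element `g` with `g ^ q = 1`. -/
def zmodPow {G : Type*} [Group G] (q : ℕ) [NeZero q] (g : G) (hg : g ^ q = 1) :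
    Multiplicative (ZMod q) →* G where
  toFun x := g ^ (toAdd x).val
  map_one' := by
    show g ^ (toAdd (1 : Multiplicative (ZMod q))).val = 1
    rw [toAdd_one, ZMod.val_zero, pow_zero]
  map_mul' x y := by
    have key : ∀ m : ℕ, g ^ (m % q) = g ^ m := fun m => by
      conv_rhs => rw [← Nat.div_add_mod m q]
      rw [pow_add, pow_mul, hg, one_pow, one_mul]
    show g ^ (toAdd (x * y)).val = g ^ (toAdd x).val * g ^ (toAdd y).val
    rw [toAdd_mul, ZMod.val_add, key, pow_add]

namespace Hyp

variable {p q i : ℕ}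

/-- The action of `C_q` on `C_{pq}` sending the generator to multiplication by `i`. -/
def phiN (h : Hyp p q i) : Multiplicative (ZMod q) →* MulAut (Multiplicative (ZMod (p * q))) :=
  haveI : NeZero q := ⟨h.hq.ne_zero⟩
  zmodPow q (zmodMulAut (p * q) h.unit) (by rw [← map_pow, h.unit_pow, map_one])

/-- The action of `C_q` on `D_{2pq}` sending the generator to `τ` (`τ(a) = a^i`, `τ(b) = b`). -/
def phiG (h : Hyp p q i) : Multiplicative (ZMod q) →* MulAut (DihedralGroup (p * q)) :=
  haveI : NeZero q := ⟨h.hq.ne_zero⟩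
  zmodPow q (dihedralAut (p * q) h.unit) (by rw [← map_pow, h.unit_pow, map_one])

/-- The action of `C_q` on `C_p` sending the generator to multiplication by `i`. -/
def phiF (h : Hyp p q i) : Multiplicative (ZMod q) →* MulAut (Multiplicative (ZMod p)) :=
  haveI : NeZero q := ⟨h.hq.ne_zero⟩
  zmodPow q (zmodMulAut p h.unitP) (by rw [← map_pow, h.unitP_pow, map_one])

end Hyp

/-- The group `N_{pq²} = ⟨a, c ∣ a^{pq} = c^q = 1, c a c⁻¹ = a^i⟩ = C_{pq} ⋊ C_q`. -/
abbrev Npq2 {p q i : ℕ} (h : Hyp p q i) : Type :=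
  Multiplicative (ZMod (p * q)) ⋊[h.phiN] Multiplicative (ZMod q)

/-- The group `G_{p,q} = D_{2pq} ⋊_φ C_q`. -/
abbrev Gpq {p q i : ℕ} (h : Hyp p q i) : Type :=
  DihedralGroup (p * q) ⋊[h.phiG] Multiplicative (ZMod q)

/-- The Frobenius group `F_{p,q} = C_p ⋊ C_q` (the nonabelian group of order `pq`). -/
abbrev Fpq {p q i : ℕ} (h : Hyp p q i) : Type :=
  Multiplicative (ZMod p) ⋊[h.phiF] Multiplicative (ZMod q)

variable {p q i : ℕ}

/-- The generator `a` of `N_{pq²}`. -/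
def aN (h : Hyp p q i) : Npq2 h := SemidirectProduct.inl (ofAdd 1)

/-- The generator `c` of `N_{pq²}`. -/
def cN (h : Hyp p q i) : Npq2 h := SemidirectProduct.inr (ofAdd 1)

/-- The generator `a` of `G_{p,q}`. -/
def aG (h : Hyp p q i) : Gpq h := SemidirectProduct.inl (DihedralGroup.r 1)

/-- The generator `b` of `G_{p,q}`. -/
def bG (h : Hyp p q i) : Gpq h := SemidirectProduct.inl (DihedralGroup.sr 0)

/-- The generator `c` of `G_{p,q}`. -/
def cG (h : Hyp p q i) : Gpq h := SemidirectProduct.inr (ofAdd 1)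

/-- The real conjugacy class `(g)^± = (g) ∪ (g⁻¹)`. -/
def realClass {G : Type*} [Group G] (g : G) : Set G := {x | IsConj g x ∨ IsConj g⁻¹ x}

/-- `N` is a normal subgroup whose quotient is an `ℓ`-group (the quotient has `ℓ`-power order,
i.e. `N` has `ℓ`-power index). -/
def OQuot {G : Type*} [Group G] (ℓ : ℕ) (N : Subgroup G) : Prop :=
  N.Normal ∧ ∃ k : ℕ, N.index = ℓ ^ k

/-- `H` is a large subgroup of `G`: it contains `O^ℓ(G)`, the smallest normal subgroup
with `ℓ`-group quotient, for some prime `ℓ`. -/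
def IsLarge {G : Type*} [Group G] (H : Subgroup G) : Prop :=
  ∃ ℓ : ℕ, Nat.Prime ℓ ∧
    ∃ N : Subgroup G, OQuot ℓ N ∧ (∀ M : Subgroup G, OQuot ℓ M → N ≤ M) ∧ N ≤ H

section Reps

variable {k : Type*} [CommSemiring k] {G : Type*} [Group G]

/-- The subspace `V^H` of `H`-fixed vectors of a representation. -/
def fixedPts {V : Type*} [AddCommMonoid V] [Module k V]
    (ρ : Representation k G V) (H : Subgroup G) : Submodule k V where
  carrier := {v | ∀ g ∈ H, ρ g v = v}
  add_mem' := by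
    intro a b ha hb g hg
    rw [map_add, ha g hg, hb g hg]
  zero_mem' := by
    intro g hg
    rw [map_zero]
  smul_mem' := by
    intro c v hv g hg
    rw [map_smul, hv g hg]

end Reps

/-- The weak gap condition for a real representation: `dim V^P ≥ 2 dim V^H` for all
`P < H ≤ G` with `P` of prime power order. -/
def WeakGap {G : Type*} [Group G] {V : Type*} [AddCommGroup V] [Module ℝ V]
    (ρ : Representation ℝ G V) : Prop :=
  ∀ P H : Subgroup G, P < H → (∃ ℓ k : ℕ, Nat.Prime ℓ ∧ Nat.card P = ℓ ^ k) →
    2 * Module.finrank ℝ (fixedPts ρ H) ≤ Module.finrank ℝ (fixedPts ρ P)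

/-- Isomorphism of real representations: an equivariant linear equivalence. -/
def RepIso {G : Type*} [Group G] {U V : Type*} [AddCommGroup U] [Module ℝ U]
    [AddCommGroup V] [Module ℝ V]
    (ρU : Representation ℝ G U) (ρV : Representation ℝ G V) : Prop :=
  ∃ e : U ≃ₗ[ℝ] V, ∀ (g : G) (u : U), e (ρU g u) = ρV g (e u)

/-- Two real representations are `𝒫`-matched if their restrictions to every subgroup of
prime power order are isomorphic. -/
def PMatched {G : Type*} [Group G] {U V : Type*} [AddCommGroup U] [Module ℝ U]
    [AddCommGroup V] [Module ℝ V]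
    (ρU : Representation ℝ G U) (ρV : Representation ℝ G V) : Prop :=
  ∀ P : Subgroup G, (∃ ℓ k : ℕ, Nat.Prime ℓ ∧ Nat.card P = ℓ ^ k) →
    RepIso (ρU.comp P.subtype) (ρV.comp P.subtype)

/-- A bundled finite-dimensional-free real representation of `G`. -/
structure RealRep (G : Type*) [Group G] where
  carrier : Type
  [acg : AddCommGroup carrier]
  [mod : Module ℝ carrier]
  rho : Representation ℝ G carrier

attribute [instance] RealRep.acg RealRep.mod

theorem dihedralAut_pow_r (n : ℕ) (u : (ZMod n)ˣ) (k : ℕ) (m : ZMod n) :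
    ((dihedralAut n u) ^ k) (DihedralGroup.r m)
      = DihedralGroup.r (((u ^ k : (ZMod n)ˣ) : ZMod n) * m) := by
  induction k generalizing m with
  | zero => simp
  | succ k ih =>
    rw [pow_succ, MulAut.mul_apply]
    have h1 : (dihedralAut n u) (DihedralGroup.r m) = DihedralGroup.r ((u : ZMod n) * m) := rfl
    rw [h1, ih, pow_succ, Units.val_mul, mul_assoc]

theorem Hyp.phiG_r (h : Hyp p q i) (z : Multiplicative (ZMod q)) (m : ZMod (p * q)) :
    h.phiG z (DihedralGroup.r m)
      = DihedralGroup.r (((h.unit ^ (toAdd z).val : (ZMod (p * q))ˣ) : ZMod (p * q)) * m) := by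
  have h1 : h.phiG z = (dihedralAut (p * q) h.unit) ^ (toAdd z).val := rfl
  rw [h1, dihedralAut_pow_r]

theorem r_inv (n : ℕ) (m : ZMod n) : (DihedralGroup.r m)⁻¹ = DihedralGroup.r (-m) := rfl

/-- The subgroup `N_{pq²} = {(aˡ, cᵐ)}` of `G_{p,q}`. -/
def NSub (h : Hyp p q i) : Subgroup (Gpq h) where
  carrier := {x | ∃ l : ZMod (p * q), x.left = DihedralGroup.r l}
  one_mem' := ⟨0, rfl⟩
  mul_mem' := by
    rintro x y ⟨lx, hx⟩ ⟨ly, hy⟩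
    refine ⟨lx + (h.unit ^ (toAdd x.right).val : (ZMod (p * q))ˣ) * ly, ?_⟩
    rw [SemidirectProduct.mul_left, hx, hy, h.phiG_r, DihedralGroup.r_mul_r]
  inv_mem' := by
    rintro x ⟨lx, hx⟩
    refine ⟨-((h.unit ^ (toAdd x.right⁻¹).val : (ZMod (p * q))ˣ) * lx), ?_⟩
    rw [SemidirectProduct.inv_left, hx, r_inv, h.phiG_r]
    congr 1
    ring

/-- The subgroup `N_{2pq} = {(bᵉaˡ, 1)} ≅ D_{2pq}` of `G_{p,q}`. -/
def N2pqSub (h : Hyp p q i) : Subgroup (Gpq h) :=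
  MonoidHom.ker SemidirectProduct.rightHom

/-- The subgroup `N¹_{pq} = {(aˡ, 1)}` of `G_{p,q}`. -/
def NpqOneSub (h : Hyp p q i) : Subgroup (Gpq h) where
  carrier := {x | x.right = 1 ∧ ∃ l : ZMod (p * q), x.left = DihedralGroup.r l}
  one_mem' := ⟨rfl, 0, rfl⟩
  mul_mem' := by
    rintro x y ⟨hx1, lx, hx⟩ ⟨hy1, ly, hy⟩
    refine ⟨by rw [SemidirectProduct.mul_right, hx1, hy1, mul_one],
      lx + (h.unit ^ (toAdd x.right).val : (ZMod (p * q))ˣ) * ly, ?_⟩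
    rw [SemidirectProduct.mul_left, hx, hy, h.phiG_r, DihedralGroup.r_mul_r]
  inv_mem' := by
    rintro x ⟨hx1, lx, hx⟩
    refine ⟨by rw [SemidirectProduct.inv_right, hx1, inv_one],
      -((h.unit ^ (toAdd x.right⁻¹).val : (ZMod (p * q))ˣ) * lx), ?_⟩
    rw [SemidirectProduct.inv_left, hx, r_inv, h.phiG_r]
    congr 1
    ring

/-- The subgroup `N²_{pq} = {(a^{qs}, cᵐ)}` of `G_{p,q}`. -/
def NpqTwoSub (h : Hyp p q i) : Subgroup (Gpq h) where
  carrier := {x | ∃ s : ZMod (p * q), x.left = DihedralGroup.r ((q : ZMod (p * q)) * s)}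
  one_mem' := ⟨0, by rw [mul_zero]; rfl⟩
  mul_mem' := by
    rintro x y ⟨sx, hx⟩ ⟨sy, hy⟩
    refine ⟨sx + (h.unit ^ (toAdd x.right).val : (ZMod (p * q))ˣ) * sy, ?_⟩
    rw [SemidirectProduct.mul_left, hx, hy, h.phiG_r, DihedralGroup.r_mul_r]
    congr 1
    ring
  inv_mem' := by
    rintro x ⟨sx, hx⟩
    refine ⟨-((h.unit ^ (toAdd x.right⁻¹).val : (ZMod (p * q))ˣ) * sx), ?_⟩
    rw [SemidirectProduct.inv_left, hx, r_inv, h.phiG_r]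
    congr 1
    ring

/-- The subgroup `N_p = {(a^{qs}, 1)}` of `G_{p,q}`. -/
def NpSub (h : Hyp p q i) : Subgroup (Gpq h) where
  carrier := {x | x.right = 1 ∧ ∃ s : ZMod (p * q), x.left = DihedralGroup.r ((q : ZMod (p * q)) * s)}
  one_mem' := ⟨rfl, 0, by rw [mul_zero]; rfl⟩
  mul_mem' := by
    rintro x y ⟨hx1, sx, hx⟩ ⟨hy1, sy, hy⟩
    refine ⟨by rw [SemidirectProduct.mul_right, hx1, hy1, mul_one],
      sx + (h.unit ^ (toAdd x.right).val : (ZMod (p * q))ˣ) * sy, ?_⟩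
    rw [SemidirectProduct.mul_left, hx, hy, h.phiG_r, DihedralGroup.r_mul_r]
    congr 1
    ring
  inv_mem' := by
    rintro x ⟨hx1, sx, hx⟩
    refine ⟨by rw [SemidirectProduct.inv_right, hx1, inv_one],
      -((h.unit ^ (toAdd x.right⁻¹).val : (ZMod (p * q))ˣ) * sx), ?_⟩
    rw [SemidirectProduct.inv_left, hx, r_inv, h.phiG_r]
    congr 1
    ring

/-- The subgroup `N_q = {(a^{ps}, 1)}` of `G_{p,q}`. -/
def NqSub (h : Hyp p q i) : Subgroup (Gpq h) where
  carrier := {x | x.right = 1 ∧ ∃ s : ZMod (p * q), x.left = DihedralGroup.r ((p : ZMod (p * q)) * s)}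
  one_mem' := ⟨rfl, 0, by rw [mul_zero]; rfl⟩
  mul_mem' := by
    rintro x y ⟨hx1, sx, hx⟩ ⟨hy1, sy, hy⟩
    refine ⟨by rw [SemidirectProduct.mul_right, hx1, hy1, mul_one],
      sx + (h.unit ^ (toAdd x.right).val : (ZMod (p * q))ˣ) * sy, ?_⟩
    rw [SemidirectProduct.mul_left, hx, hy, h.phiG_r, DihedralGroup.r_mul_r]
    congr 1
    ring
  inv_mem' := by
    rintro x ⟨hx1, sx, hx⟩
    refine ⟨by rw [SemidirectProduct.inv_right, hx1, inv_one],
      -((h.unit ^ (toAdd x.right⁻¹).val : (ZMod (p * q))ˣ) * sx), ?_⟩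
    rw [SemidirectProduct.inv_left, hx, r_inv, h.phiG_r]
    congr 1
    ring

end Mizerka

namespace Mizerka

open SemidirectProduct

variable {p q i : ℕ}

theorem Hyp.p_ne_q (h : Hyp p q i) : p ≠ q := by
  have h1 : 0 < p - 1 := by have := h.hp.two_le; omega
  have := Nat.le_of_dvd h1 h.hdvd
  omega

theorem aN_zpow (h : Hyp p q i) (m : ℤ) :
    aN h ^ m = SemidirectProduct.inl (ofAdd ((m : ZMod (p * q)))) := by
  rw [aN, ← map_zpow, ← ofAdd_zsmul, Int.smul_one_eq_cast]

theorem aN_pow (h : Hyp p q i) (m : ℕ) :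
    aN h ^ m = SemidirectProduct.inl (ofAdd ((m : ZMod (p * q)))) := by
  rw [aN, ← map_pow, ← ofAdd_nsmul, Nat.smul_one_eq_cast]

theorem cN_pow (h : Hyp p q i) (m : ℕ) :
    cN h ^ m = SemidirectProduct.inr (ofAdd ((m : ZMod q))) := by
  rw [cN, ← map_pow, ← ofAdd_nsmul, Nat.smul_one_eq_cast]

theorem cN_pow_q (h : Hyp p q i) : cN h ^ q = 1 := by
  rw [cN_pow, ZMod.natCast_self, ofAdd_zero, map_one]

theorem aN_pow_pq (h : Hyp p q i) : aN h ^ (p * q) = 1 := by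
  rw [aN_pow, ZMod.natCast_self, ofAdd_zero, map_one]

theorem Hyp.phiN_apply (h : Hyp p q i) (z : Multiplicative (ZMod q))
    (x : Multiplicative (ZMod (p * q))) :
    h.phiN z x
      = ofAdd (((h.unit ^ (toAdd z).val : (ZMod (p * q))ˣ) : ZMod (p * q)) * toAdd x) := by
  show ((zmodMulAut (p * q) h.unit) ^ (toAdd z).val) x = _
  rw [← map_pow]
  rfl

theorem conj_inl (h : Hyp p q i) (g : Npq2 h) (x : Multiplicative (ZMod (p * q))) :
    g * SemidirectProduct.inl x * g⁻¹ = SemidirectProduct.inl (h.phiN g.right x) := by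
  ext
  · show (g.left * h.phiN g.right x) * h.phiN (g.right * 1) (h.phiN g.right⁻¹ g.left⁻¹)
      = h.phiN g.right x
    rw [mul_one, ← MulAut.mul_apply, ← map_mul, mul_inv_cancel, map_one, MulAut.one_apply,
      mul_comm g.left, mul_assoc, mul_inv_cancel, mul_one]
  · show g.right * 1 * g.right⁻¹ = 1
    rw [mul_one, mul_inv_cancel]

theorem relation (h : Hyp p q i) : cN h * aN h * (cN h)⁻¹ = aN h ^ i := by
  rw [aN_pow, cN, aN, ← map_inv, ← SemidirectProduct.inl_aut]
  congr 1
  rw [Hyp.phiN_apply]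
  have h1 : toAdd (ofAdd (1 : ZMod q)) = 1 := rfl
  have h2 : toAdd (ofAdd (1 : ZMod (p * q))) = 1 := rfl
  rw [h1, h2, ZMod.val_one_eq_one_mod]
  have h3 : 1 % q = 1 := Nat.mod_eq_of_lt h.hq.one_lt
  rw [h3, pow_one, mul_one]
  show ofAdd ((ZMod.unitOfCoprime i h.coprime : ZMod (p * q))) = _
  rw [ZMod.coe_unitOfCoprime]

theorem mem_of_coprime_cN (h : Hyp p q i) (M : Subgroup (Npq2 h)) (hM : M.Normal)
    (hcop : Nat.Coprime M.index q) : cN h ∈ M := by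
  haveI := hM
  set π := QuotientGroup.mk' M with hπ
  have h1 : orderOf (π (cN h)) ∣ q := orderOf_dvd_of_pow_eq_one (by
    rw [← map_pow, cN_pow_q, map_one])
  have h2 : orderOf (π (cN h)) ∣ M.index := by
    rw [Subgroup.index_eq_card]; exact orderOf_dvd_natCard _
  have h3 := Nat.dvd_gcd h2 h1
  rw [Nat.Coprime.gcd_eq_one hcop] at h3
  have h4 : π (cN h) = 1 := orderOf_eq_one_iff.mp (Nat.dvd_one.mp h3)
  exact (QuotientGroup.eq_one_iff _).mp h4

theorem mem_of_coprime_aN (h : Hyp p q i) (M : Subgroup (Npq2 h)) (hM : M.Normal)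
    (hcop : Nat.Coprime M.index q) : aN h ∈ M := by
  haveI := hM
  have hc := mem_of_coprime_cN h M hM hcop
  set π := QuotientGroup.mk' M with hπ
  have hc1 : π (cN h) = 1 := (QuotientGroup.eq_one_iff _).mpr hc
  have hi0 : i ≠ 0 := by
    rintro rfl
    have := h.coprime_q
    rw [Nat.coprime_zero_left] at this
    exact h.hq.one_lt.ne' this
  have hi1 : i ≠ 1 := by
    rintro rfl
    have h2 := h.hord
    rw [Nat.cast_one, orderOf_one] at h2
    exact h.hq.one_lt.ne' h2.symm
  have hi2 : 2 ≤ i := by omega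
  have hAA : π (aN h) ^ (i - 1) = 1 := by
    have e1 : π (aN h) ^ i = π (aN h) := by
      rw [← map_pow, ← relation h, map_mul, map_mul, map_inv, hc1, one_mul, inv_one, mul_one]
    have e2 : π (aN h) ^ (i - 1) * π (aN h) = 1 * π (aN h) := by
      rw [← pow_succ, Nat.sub_add_cancel (by omega), e1, one_mul]
    exact mul_right_cancel e2
  set d := orderOf (π (aN h)) with hd
  have hd1 : d ∣ i - 1 := orderOf_dvd_of_pow_eq_one hAA
  have hd2 : d ∣ p * q := orderOf_dvd_of_pow_eq_one (by rw [← map_pow, aN_pow_pq, map_one])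
  have hd3 : d ∣ M.index := by rw [Subgroup.index_eq_card]; exact orderOf_dvd_natCard _
  have hp_ndvd : ¬ p ∣ i - 1 := by
    intro hdvd
    have hmodp : i ≡ 1 [MOD p] := ((Nat.modEq_iff_dvd' (by omega)).mpr hdvd).symm
    have h1 : (i : ZMod p) = ((1 : ℕ) : ZMod p) := (ZMod.natCast_eq_natCast_iff _ _ _).mpr hmodp
    have h2 := h.hord
    rw [h1, Nat.cast_one, orderOf_one] at h2
    exact h.hq.one_lt.ne' h2.symm
  have hcop_dp : Nat.Coprime d p :=
    ((Nat.Prime.coprime_iff_not_dvd h.hp).mpr fun hpd => hp_ndvd (hpd.trans hd1)).symm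
  have hdq : d ∣ q := hcop_dp.dvd_of_dvd_mul_left hd2
  have h3 := Nat.dvd_gcd hd3 hdq
  rw [Nat.Coprime.gcd_eq_one hcop] at h3
  have h4 : π (aN h) = 1 := orderOf_eq_one_iff.mp (Nat.dvd_one.mp h3)
  exact (QuotientGroup.eq_one_iff _).mp h4

theorem eq_top_of_coprime (h : Hyp p q i) (M : Subgroup (Npq2 h)) (hM : M.Normal)
    (hcop : Nat.Coprime M.index q) : M = ⊤ := by
  haveI : NeZero (p * q) := ⟨Nat.mul_ne_zero h.hp.ne_zero h.hq.ne_zero⟩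
  haveI : NeZero q := ⟨h.hq.ne_zero⟩
  have ha := mem_of_coprime_aN h M hM hcop
  have hc := mem_of_coprime_cN h M hM hcop
  rw [eq_top_iff]
  rintro x -
  have hx : aN h ^ (toAdd x.left).val * cN h ^ (toAdd x.right).val = x := by
    rw [aN_pow, cN_pow,
      show (((toAdd x.left).val : ℕ) : ZMod (p * q)) = toAdd x.left from
        ZMod.natCast_rightInverse _,
      show (((toAdd x.right).val : ℕ) : ZMod q) = toAdd x.right from
        ZMod.natCast_rightInverse _,
      ofAdd_toAdd, ofAdd_toAdd, SemidirectProduct.inl_left_mul_inr_right]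
  rw [← hx]
  exact mul_mem (pow_mem ha _) (pow_mem hc _)

theorem card_Npq2 (h : Hyp p q i) : Nat.card (Npq2 h) = p * q * q := by
  have e : Npq2 h ≃ ZMod (p * q) × ZMod q :=
    ⟨fun x => (toAdd x.left, toAdd x.right), fun y => ⟨ofAdd y.1, ofAdd y.2⟩,
      fun x => rfl, fun y => rfl⟩
  rw [Nat.card_congr e, Nat.card_prod, Nat.card_zmod, Nat.card_zmod]

theorem orderOf_aN (h : Hyp p q i) : orderOf (aN h) = p * q := by
  rw [aN, orderOf_injective SemidirectProduct.inl SemidirectProduct.inl_injective,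
    orderOf_ofAdd_eq_addOrderOf, ZMod.addOrderOf_one]

theorem orderOf_aN_pow_q (h : Hyp p q i) : orderOf (aN h ^ q) = p := by
  rw [orderOf_pow' (aN h) h.hq.ne_zero, orderOf_aN h,
    Nat.gcd_eq_right (dvd_mul_left q p), Nat.mul_div_cancel _ h.hq.pos]

theorem index_Np (h : Hyp p q i) :
    (Subgroup.zpowers (aN h ^ q)).index = q * q := by
  have h1 := Subgroup.card_mul_index (Subgroup.zpowers (aN h ^ q))
  rw [Nat.card_zpowers, orderOf_aN_pow_q h, card_Npq2 h] at h1
  exact Nat.eq_of_mul_eq_mul_left h.hp.pos (h1.trans (mul_assoc p q q))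

theorem Np_normal (h : Hyp p q i) : (Subgroup.zpowers (aN h ^ q)).Normal := by
  constructor
  intro n hn g
  obtain ⟨k, rfl⟩ := Subgroup.mem_zpowers_iff.mp hn
  have e1 : ∀ m : ℤ, (aN h ^ q) ^ m
      = SemidirectProduct.inl (ofAdd ((((q : ℤ) * m : ℤ) : ZMod (p * q)))) := by
    intro m
    rw [← zpow_natCast (aN h) q, ← zpow_mul, aN_zpow]
  rw [e1, conj_inl, Hyp.phiN_apply]
  obtain ⟨m, hm⟩ := ZMod.intCast_surjective
    (((h.unit ^ (toAdd g.right).val : (ZMod (p * q))ˣ) : ZMod (p * q)) * ((k : ℤ) : ZMod (p * q)))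
  rw [Subgroup.mem_zpowers_iff]
  refine ⟨m, ?_⟩
  rw [e1]
  congr 1
  rw [toAdd_ofAdd]
  push_cast at hm ⊢
  rw [hm]
  ring_nf

theorem part4 (h : Hyp p q i) (M : Subgroup (Npq2 h)) (hM : OQuot q M) :
    Subgroup.zpowers (aN h ^ q) ≤ M := by
  obtain ⟨hMnorm, k, hk⟩ := hM
  haveI := hMnorm
  rw [Subgroup.zpowers_le]
  set π := QuotientGroup.mk' M with hπ
  set d := orderOf (π (aN h)) with hd
  have hd1 : d ∣ p * q := orderOf_dvd_of_pow_eq_one (by rw [← map_pow, aN_pow_pq, map_one])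
  have hd2 : d ∣ q ^ k := by
    rw [← hk, Subgroup.index_eq_card]; exact orderOf_dvd_natCard _
  have hpd : ¬ p ∣ d := by
    intro hpd
    have h1 : p ∣ q ^ k := hpd.trans hd2
    have h2 := h.hp.dvd_of_dvd_pow h1
    exact h.p_ne_q ((Nat.prime_dvd_prime_iff_eq h.hp h.hq).mp h2)
  have hdq : d ∣ q :=
    (((Nat.Prime.coprime_iff_not_dvd h.hp).mpr hpd).symm).dvd_of_dvd_mul_left hd1
  have h5 : π (aN h ^ q) = 1 := by
    rw [map_pow, orderOf_dvd_iff_pow_eq_one.mp hdq]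
  exact (QuotientGroup.eq_one_iff _).mp h5

end Mizerka


open Mizerka in
/-- With `N_p = ⟨a^q⟩ ≤ N_{pq²}` (a normal subgroup of order `p`):
`O^q(N_{pq²}) = N_p`, `O^p(N_{pq²}) = N_{pq²}`, and every large subgroup of `N_{pq²}`
contains `N_p`. -/
theorem statement_2 {p q i : ℕ} (h : Hyp p q i) :
    let Np : Subgroup (Npq2 h) := Subgroup.zpowers ((aN h) ^ q)
    Np.Normal ∧ Nat.card Np = p ∧
    OQuot q Np ∧ (∀ M : Subgroup (Npq2 h), OQuot q M → Np ≤ M) ∧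
    (∀ M : Subgroup (Npq2 h), OQuot p M → M = ⊤) ∧
    (∀ H : Subgroup (Npq2 h), IsLarge H → Np ≤ H) := by
  intro Np
  have hnormal := Mizerka.Np_normal h
  refine ⟨hnormal, ?_, ⟨hnormal, 2, by rw [Mizerka.index_Np h, sq]⟩, Mizerka.part4 h, ?_, ?_⟩
  · rw [Nat.card_zpowers]; exact Mizerka.orderOf_aN_pow_q h
  · rintro M ⟨hMn, k, hk⟩
    refine Mizerka.eq_top_of_coprime h M hMn ?_
    rw [hk]
    exact Nat.Coprime.pow_left _ ((Nat.coprime_primes h.hp h.hq).mpr h.p_ne_q)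
  · rintro H ⟨ℓ, hℓ, N, hN, hmin, hNH⟩
    by_cases hcase : ℓ = q
    · subst hcase
      exact le_trans (Mizerka.part4 h N hN) hNH
    · obtain ⟨hNn, k, hk⟩ := hN
      have hNtop : N = ⊤ := Mizerka.eq_top_of_coprime h N hNn (by
        rw [hk]; exact Nat.Coprime.pow_left _ ((Nat.coprime_primes hℓ h.hq).mpr hcase))
      rw [hNtop] at hNH
      exact le_trans le_top hNH
end

section
/- For any integers l₀ ∈ {0,…,pq−1} and m₀ ∈ {0,…,q−1}, the conjugacy class of g = (b a^{l₀}, c^{m₀}) in G_{p,q} equals {(b a^l, c^{m₀}) : 0 ≤ l ≤ pq−1}, and thus has exactly pq elements. Moreover, g has order 2q if m₀ ≠ 0, and order 2 if m₀ = 0. -/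
open Multiplicative

namespace Mizerka

variable {p q i : ℕ}

section Stmt8Aux

variable {p q i : ℕ}

theorem dihedralAut_pow_sr (n : ℕ) (u : (ZMod n)ˣ) (k : ℕ) (m : ZMod n) :
    ((dihedralAut n u) ^ k) (DihedralGroup.sr m)
      = DihedralGroup.sr (((u ^ k : (ZMod n)ˣ) : ZMod n) * m) := by
  induction k generalizing m with
  | zero => simp
  | succ k ih =>
    rw [pow_succ, MulAut.mul_apply]
    have h1 : (dihedralAut n u) (DihedralGroup.sr m) = DihedralGroup.sr ((u : ZMod n) * m) := rfl
    rw [h1, ih, pow_succ, Units.val_mul, mul_assoc]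

theorem Hyp.phiG_sr (h : Hyp p q i) (z : Multiplicative (ZMod q)) (m : ZMod (p * q)) :
    h.phiG z (DihedralGroup.sr m)
      = DihedralGroup.sr (((h.unit ^ (toAdd z).val : (ZMod (p * q))ˣ) : ZMod (p * q)) * m) := by
  have h1 : h.phiG z = (dihedralAut (p * q) h.unit) ^ (toAdd z).val := rfl
  rw [h1, dihedralAut_pow_sr]

/-- The homomorphism `C_q →* (ZMod (p*q))ˣ` sending the generator to `h.unit`. -/
noncomputable def Hyp.uHom (h : Hyp p q i) : Multiplicative (ZMod q) →* (ZMod (p * q))ˣ :=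
  haveI : NeZero q := ⟨h.hq.ne_zero⟩
  zmodPow q h.unit h.unit_pow

theorem Hyp.uHom_apply (h : Hyp p q i) (z : Multiplicative (ZMod q)) :
    h.uHom z = h.unit ^ (toAdd z).val := rfl

theorem Hyp.unit_val_pow (h : Hyp p q i) (z : Multiplicative (ZMod q)) (n : ℕ) :
    h.unit ^ (toAdd (z ^ n)).val = (h.unit ^ (toAdd z).val) ^ n := by
  rw [← h.uHom_apply, ← h.uHom_apply, map_pow]

/-- Conjugation formula in `G_{p,q}`. -/
theorem Hyp.conj_mk (h : Hyp p q i) (y x : DihedralGroup (p * q))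
    (z w : Multiplicative (ZMod q)) :
    (⟨y, z⟩ : Gpq h) * ⟨x, w⟩ * (⟨y, z⟩ : Gpq h)⁻¹
      = ⟨y * h.phiG z x * h.phiG w y⁻¹, w⟩ := by
  have key : h.phiG (z * w) (h.phiG z⁻¹ y⁻¹) = h.phiG w y⁻¹ := by
    rw [← MulAut.mul_apply, ← map_mul, mul_comm z w, mul_assoc, mul_inv_cancel, mul_one]
  ext
  · rw [SemidirectProduct.mul_left, SemidirectProduct.mul_left, SemidirectProduct.inv_left,
      SemidirectProduct.mul_right, key, mul_assoc]
  · rw [SemidirectProduct.mul_right, SemidirectProduct.mul_right,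
      SemidirectProduct.inv_right, mul_comm z w, mul_assoc, mul_inv_cancel, mul_one]

/-- Power formula for elements of `G_{p,q}` with rotation left component. -/
theorem Hyp.pow_mk_r (h : Hyp p q i) (a : ZMod (p * q)) (z : Multiplicative (ZMod q)) (n : ℕ) :
    (⟨DihedralGroup.r a, z⟩ : Gpq h) ^ n
      = ⟨DihedralGroup.r (a * ∑ k ∈ Finset.range n,
          ((h.unit ^ (toAdd z).val : (ZMod (p * q))ˣ) : ZMod (p * q)) ^ k), z ^ n⟩ := by
  induction n with
  | zero =>
    ext
    · rw [pow_zero]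
      show (1 : DihedralGroup (p * q)) = _
      rw [DihedralGroup.one_def]
      simp
    · rw [pow_zero, pow_zero]
      rfl
  | succ n ih =>
    rw [pow_succ, ih]
    ext
    · rw [SemidirectProduct.mul_left, h.phiG_r, DihedralGroup.r_mul_r]
      show DihedralGroup.r _ = DihedralGroup.r _
      congr 1
      rw [h.unit_val_pow]
      simp only [Units.val_pow_eq_pow_val, Finset.sum_range_succ]
      ring
    · rw [SemidirectProduct.mul_right]
      show z ^ n * z = z ^ (n + 1)
      rw [pow_succ]

theorem Hyp.two_ne_zero_zmod_q (h : Hyp p q i) : (2 : ZMod q) ≠ 0 := by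
  intro hc
  have : ((2 : ℕ) : ZMod q) = 0 := by exact_mod_cast hc
  have hdvd : q ∣ 2 := (ZMod.natCast_eq_zero_iff 2 q).mp this
  have h2 := Nat.le_of_dvd (by norm_num) hdvd
  have := h.hq.two_le
  have := Nat.odd_iff.mp h.hoddq
  omega

theorem Hyp.isUnit_one_add_pow (h : Hyp p q i) (m : ℕ) :
    IsUnit ((1 : ZMod (p * q)) + (i : ZMod (p * q)) ^ m) := by
  haveI : NeZero p := ⟨h.hp.ne_zero⟩
  have hx : ((i : ZMod p)) ^ m ≠ -1 := by
    intro hm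
    have h2m : (i : ZMod p) ^ (m * 2) = 1 := by
      rw [pow_mul, hm, neg_one_sq]
    have hq2m : q ∣ m * 2 := by
      have := orderOf_dvd_of_pow_eq_one h2m
      rwa [h.hord] at this
    have hcop : Nat.Coprime q 2 := by
      rw [Nat.coprime_comm, Nat.coprime_primes Nat.prime_two h.hq]
      have := Nat.odd_iff.mp h.hoddq
      omega
    have hqm : q ∣ m := (Nat.Coprime.dvd_of_dvd_mul_right hcop hq2m)
    obtain ⟨t, rfl⟩ := hqm
    have hone : (i : ZMod p) ^ (q * t) = 1 := by
      rw [pow_mul, ← h.hord, pow_orderOf_eq_one, one_pow]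
    rw [hone] at hm
    have hp2 : ((2 : ℕ) : ZMod p) = 0 := by push_cast; linear_combination hm
    have hdvd : p ∣ 2 := (ZMod.natCast_eq_zero_iff 2 p).mp hp2
    have := Nat.le_of_dvd (by norm_num) hdvd
    have := h.hp.two_le
    have := Nat.odd_iff.mp h.hoddp
    omega
  have hcast : ((1 : ZMod (p * q)) + (i : ZMod (p * q)) ^ m) = ((1 + i ^ m : ℕ) : ZMod (p * q)) := by
    push_cast; ring
  rw [hcast]
  rw [ZMod.isUnit_iff_coprime]
  apply Nat.Coprime.mul_right
  · rw [Nat.coprime_comm]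
    rw [h.hp.coprime_iff_not_dvd]
    intro hdvd
    have : ((1 + i ^ m : ℕ) : ZMod p) = 0 := (ZMod.natCast_eq_zero_iff _ p).mpr hdvd
    push_cast at this
    exact hx (by linear_combination this)
  · rw [Nat.coprime_comm]
    rw [h.hq.coprime_iff_not_dvd]
    intro hdvd
    have h0 : ((1 + i ^ m : ℕ) : ZMod q) = 0 := (ZMod.natCast_eq_zero_iff _ q).mpr hdvd
    have hi1 : (i : ZMod q) = 1 := by
      have := (ZMod.natCast_eq_natCast_iff i 1 q).mpr h.hmod
      simpa using this
    rw [Nat.cast_add, Nat.cast_pow, hi1] at h0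
    simp at h0
    exact h.two_ne_zero_zmod_q (by linear_combination h0)

end Stmt8Aux

end Mizerka

open Mizerka Multiplicative in
/-- The conjugacy class of `g = (b a^{l₀}, c^{m₀})` in `G_{p,q}` equals
`{(b aˡ, c^{m₀}) : 0 ≤ l ≤ pq-1}` and has exactly `pq` elements; `g` has order `2q` if
`m₀ ≠ 0` and order `2` if `m₀ = 0`. -/
theorem statement_8 {p q i : ℕ} (h : Hyp p q i) (l0 : ZMod (p * q)) (m0 : ZMod q) :
    let g : Gpq h := ⟨DihedralGroup.sr l0, ofAdd m0⟩
    ({x : Gpq h | IsConj g x} =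
      {x : Gpq h | ∃ l : ZMod (p * q), x = ⟨DihedralGroup.sr l, ofAdd m0⟩}) ∧
    Nat.card {x : Gpq h | IsConj g x} = p * q ∧
    (m0 ≠ 0 → orderOf g = 2 * q) ∧
    (m0 = 0 → orderOf g = 2) := by
  intro g
  haveI : NeZero q := ⟨h.hq.ne_zero⟩
  haveI : NeZero (p * q) := ⟨Nat.mul_ne_zero h.hp.ne_zero h.hq.ne_zero⟩
  have hg : g = ⟨DihedralGroup.sr l0, ofAdd m0⟩ := rfl
  set v : ZMod (p * q) := ((h.unit ^ m0.val : (ZMod (p * q))ˣ) : ZMod (p * q)) with hv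
  have hvi : v = (i : ZMod (p * q)) ^ m0.val := by
    rw [hv, Units.val_pow_eq_pow_val, Hyp.unit, ZMod.coe_unitOfCoprime]
  have hu : IsUnit ((1 : ZMod (p * q)) + v) := hvi ▸ h.isUnit_one_add_pow m0.val
  obtain ⟨w, hw⟩ := hu
  have hww : (1 + v) * ((w⁻¹ : (ZMod (p * q))ˣ) : ZMod (p * q)) = 1 := by
    rw [← hw, ← Units.val_mul, mul_inv_cancel, Units.val_one]
  have hphisr : ∀ m : ZMod (p * q),
      h.phiG (ofAdd m0) (DihedralGroup.sr m) = DihedralGroup.sr (v * m) := fun m => by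
    rw [h.phiG_sr]; rfl
  have hphir : ∀ m : ZMod (p * q),
      h.phiG (ofAdd m0) (DihedralGroup.r m) = DihedralGroup.r (v * m) := fun m => by
    rw [h.phiG_r]; rfl
  have hset : {x : Gpq h | IsConj g x} =
      {x : Gpq h | ∃ l : ZMod (p * q), x = ⟨DihedralGroup.sr l, ofAdd m0⟩} := by
    ext x
    simp only [Set.mem_setOf_eq, isConj_iff]
    constructor
    · rintro ⟨⟨y, z⟩, rfl⟩
      rcases y with j | j
      · refine ⟨((h.unit ^ (toAdd z).val : (ZMod (p * q))ˣ) : ZMod (p * q)) * l0 - j + v * -j, ?_⟩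
        rw [hg, h.conj_mk, r_inv, h.phiG_sr, hphir, DihedralGroup.r_mul_sr,
          DihedralGroup.sr_mul_r]
      · refine ⟨v * j - (((h.unit ^ (toAdd z).val : (ZMod (p * q))ˣ) : ZMod (p * q)) * l0 - j), ?_⟩
        have hinv : (DihedralGroup.sr j)⁻¹ = DihedralGroup.sr j :=
          inv_eq_of_mul_eq_one_right (DihedralGroup.sr_mul_self j)
        rw [hg, h.conj_mk, hinv, h.phiG_sr, hphisr, DihedralGroup.sr_mul_sr,
          DihedralGroup.r_mul_sr]
    · rintro ⟨l, rfl⟩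
      refine ⟨⟨DihedralGroup.r (((w⁻¹ : (ZMod (p * q))ˣ) : ZMod (p * q)) * (l0 - l)), 1⟩, ?_⟩
      rw [hg, h.conj_mk, r_inv, hphir, map_one, MulAut.one_apply, DihedralGroup.r_mul_sr,
        DihedralGroup.sr_mul_r]
      ext
      · show DihedralGroup.sr _ = DihedralGroup.sr _
        congr 1
        linear_combination (-(l0 - l)) * hww
      · rfl
  have hinj : Function.Injective
      (fun l : ZMod (p * q) => (⟨DihedralGroup.sr l, ofAdd m0⟩ : Gpq h)) := by
    intro a b hab
    have h1 := congrArg SemidirectProduct.left hab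
    simpa using h1
  have hcard : Nat.card {x : Gpq h | IsConj g x} = p * q := by
    have hrange : {x : Gpq h | ∃ l : ZMod (p * q), x = ⟨DihedralGroup.sr l, ofAdd m0⟩} =
        Set.range (fun l : ZMod (p * q) => (⟨DihedralGroup.sr l, ofAdd m0⟩ : Gpq h)) := by
      ext x
      simp only [Set.mem_setOf_eq, Set.mem_range]
      exact ⟨fun ⟨l, hl⟩ => ⟨l, hl.symm⟩, fun ⟨l, hl⟩ => ⟨l, hl.symm⟩⟩
    rw [hset, hrange, Nat.card_range_of_injective hinj, Nat.card_zmod]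
  have hsq : g * g = ⟨DihedralGroup.r (v * l0 - l0), ofAdd (m0 + m0)⟩ := by
    rw [hg]
    ext
    · rw [SemidirectProduct.mul_left, hphisr, DihedralGroup.sr_mul_sr]
    · rw [SemidirectProduct.mul_right]
      show ofAdd m0 * ofAdd m0 = ofAdd (m0 + m0)
      rw [← ofAdd_add]
  refine ⟨hset, hcard, ?_, ?_⟩
  · -- m0 ≠ 0 → orderOf g = 2 * q
    intro hm0
    haveI : Fact (Nat.Prime q) := ⟨h.hq⟩
    have hs : m0 + m0 ≠ 0 := by
      intro hc
      apply hm0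
      have h2 : (2 : ZMod q) * m0 = 0 := by linear_combination hc
      exact (mul_eq_zero.mp h2).resolve_left h.two_ne_zero_zmod_q
    have hW : (h.unit ^ (toAdd (ofAdd (m0 + m0))).val : (ZMod (p * q))ˣ)
        = h.unit ^ m0.val * h.unit ^ m0.val := by
      have h1 := map_mul h.uHom (ofAdd m0) (ofAdd m0)
      rw [← ofAdd_add] at h1
      simpa [Hyp.uHom_apply] using h1
    have hWv : ((h.unit ^ (toAdd (ofAdd (m0 + m0))).val : (ZMod (p * q))ˣ) : ZMod (p * q))
        = v * v := by
      rw [hW, Units.val_mul]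
    have hvq : v ^ q = 1 := by
      rw [hv, ← Units.val_pow_eq_pow_val, ← pow_mul, mul_comm m0.val q, pow_mul, h.unit_pow,
        one_pow, Units.val_one]
    have hSv : (∑ k ∈ Finset.range q,
        ((h.unit ^ (toAdd (ofAdd (m0 + m0))).val : (ZMod (p * q))ˣ) : ZMod (p * q)) ^ k)
          * (v * v - 1) = 0 := by
      rw [hWv, geom_sum_mul, mul_pow, hvq]
      ring
    have hSv1 : (∑ k ∈ Finset.range q,
        ((h.unit ^ (toAdd (ofAdd (m0 + m0))).val : (ZMod (p * q))ˣ) : ZMod (p * q)) ^ k)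
          * (v - 1) = 0 := by
      set S : ZMod (p * q) := ∑ k ∈ Finset.range q,
        ((h.unit ^ (toAdd (ofAdd (m0 + m0))).val : (ZMod (p * q))ˣ) : ZMod (p * q)) ^ k
      calc S * (v - 1) = S * (v - 1) * ((1 + v) * ((w⁻¹ : (ZMod (p * q))ˣ) : ZMod (p * q))) := by
            rw [hww, mul_one]
        _ = (S * (v * v - 1)) * ((w⁻¹ : (ZMod (p * q))ˣ) : ZMod (p * q)) := by ring
        _ = 0 := by rw [hSv, zero_mul]
    have haS : (v * l0 - l0) * (∑ k ∈ Finset.range q,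
        ((h.unit ^ (toAdd (ofAdd (m0 + m0))).val : (ZMod (p * q))ˣ) : ZMod (p * q)) ^ k) = 0 := by
      linear_combination l0 * hSv1
    have hpow2q : g ^ (2 * q) = 1 := by
      rw [pow_mul, pow_two, hsq, h.pow_mk_r]
      ext
      · show DihedralGroup.r _ = _
        rw [haS]
        rfl
      · show (ofAdd (m0 + m0) : Multiplicative (ZMod q)) ^ q = 1
        rw [← ofAdd_nsmul, nsmul_eq_mul, ZMod.natCast_self, zero_mul, ofAdd_zero]
    have hq_ne : g ^ q ≠ 1 := by
      obtain ⟨t, ht⟩ := h.hoddq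
      intro hc
      have hc' : g ^ (2 * t + 1) = 1 := by rw [← ht]; exact hc
      rw [pow_succ, pow_mul, pow_two, hsq, h.pow_mk_r, hg] at hc'
      rename' hc' => hc
      have hl := congrArg SemidirectProduct.left hc
      rw [SemidirectProduct.mul_left, h.phiG_sr, DihedralGroup.r_mul_sr] at hl
      simp [DihedralGroup.one_def, -DihedralGroup.r_zero] at hl
    have h2_ne : g ^ 2 ≠ 1 := by
      intro hc
      rw [pow_two, hsq] at hc
      have hr := congrArg SemidirectProduct.right hc
      apply hs
      exact congrArg toAdd hr
    have hdvd : orderOf g ∣ 2 * q := orderOf_dvd_of_pow_eq_one hpow2q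
    have hnq : ¬ orderOf g ∣ q := fun hd => hq_ne (orderOf_dvd_iff_pow_eq_one.mp hd)
    have hn2 : ¬ orderOf g ∣ 2 := fun hd => h2_ne (orderOf_dvd_iff_pow_eq_one.mp hd)
    have hcop2q : Nat.Coprime 2 q := by
      have := Nat.odd_iff.mp h.hoddq
      rw [Nat.coprime_primes Nat.prime_two h.hq]
      omega
    have h2d : 2 ∣ orderOf g := by
      by_contra hc
      have hcop : Nat.Coprime 2 (orderOf g) := (Nat.prime_two.coprime_iff_not_dvd).mpr hc
      exact hnq (hcop.symm.dvd_of_dvd_mul_right (mul_comm 2 q ▸ hdvd))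
    have hqd : q ∣ orderOf g := by
      by_contra hc
      have hcop : Nat.Coprime q (orderOf g) := (h.hq.coprime_iff_not_dvd).mpr hc
      exact hn2 (hcop.symm.dvd_of_dvd_mul_right hdvd)
    exact Nat.dvd_antisymm hdvd (Nat.Coprime.mul_dvd_of_dvd_of_dvd hcop2q h2d hqd)
  · -- m0 = 0 → orderOf g = 2
    intro hm0
    subst hm0
    haveI : Fact (Nat.Prime 2) := ⟨Nat.prime_two⟩
    apply orderOf_eq_prime
    · rw [pow_two, hsq]
      have hv1 : v = 1 := by rw [hv, ZMod.val_zero, pow_zero, Units.val_one]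
      rw [hv1]
      ext
      · show DihedralGroup.r _ = _
        rw [one_mul, sub_self]
        rfl
      · show ofAdd ((0 : ZMod q) + 0) = 1
        rw [add_zero, ofAdd_zero]
    · rw [hg]
      intro hc
      have h1 := congrArg SemidirectProduct.left hc
      simp [DihedralGroup.one_def, -DihedralGroup.r_zero] at h1
end
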